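/- If x* is a Pareto optimal point of the unconstrained multiobjective optimization problem min_{x in R^n} f(x), where f: R^n -> R^k is continuously differentiable, then there exists alpha in R^k with alpha_i >= 0 for all i, sum_{i=1}^k alpha_i = 1, and sum_{i=1}^k alpha_i * grad f_i(x*) = 0. -/

import Mathlib

/-- Kuhn-Tucker necessary condition: at a Pareto optimal point of an
unconstrained MOP with continuously differentiable objectives, some convex combination
of the gradients vanishes. -/
theorem kkt_necessary_condition (n k : ℕ) (hk : 0 < k)
    (f : Fin k → (Fin n → ℝ) → ℝ) (hf : ∀ i, ContDiff ℝ 1 (f i))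
    (xstar : Fin n → ℝ)
    (hpareto : ¬ ∃ x : Fin n → ℝ, (∀ i, f i x ≤ f i xstar) ∧ (∃ i, f i x ≠ f i xstar)) :
    ∃ α : Fin k → ℝ, (∀ i, 0 ≤ α i) ∧ (∑ i, α i = 1) ∧
      (∑ i, α i • fderiv ℝ (f i) xstar) = 0 := by
  classical
  set g : Fin k → ((Fin n → ℝ) →L[ℝ] ℝ) := fun i => fderiv ℝ (f i) xstar with hg
  set w : Fin k → (Fin n → ℝ) := fun i j => g i (Pi.single j 1) with hw
  have hrep : ∀ (φ : (Fin n → ℝ) →L[ℝ] ℝ) (x : Fin n → ℝ),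
      φ x = ∑ j, x j * φ (Pi.single j 1) := by
    intro φ x
    have hx : x = ∑ j, x j • (Pi.single j (1:ℝ) : Fin n → ℝ) := by
      ext j'; simp [Pi.single_apply]
    conv_lhs => rw [hx]
    rw [map_sum]
    simp [smul_eq_mul]
  by_cases h0 : (0 : Fin n → ℝ) ∈ convexHull ℝ (Set.range w)
  · rw [convexHull_range_eq_exists_affineCombination] at h0
    obtain ⟨s, w', hw₀, hw₁, hsum⟩ := h0
    rw [Finset.affineCombination_eq_linear_combination s w w' hw₁] at hsum
    refine ⟨fun i => if i ∈ s then w' i else 0, fun i => ?_, ?_, ?_⟩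
    · by_cases hi : i ∈ s
      · simp [hi, hw₀ _ hi]
      · simp [hi]
    · rw [Finset.sum_ite_mem, Finset.univ_inter]
      exact hw₁
    · ext x
      have hzero : ∀ j, (∑ i ∈ s, w' i • w i) j = 0 := fun j => by rw [hsum]; rfl
      simp only [ContinuousLinearMap.sum_apply, ContinuousLinearMap.smul_apply,
        ContinuousLinearMap.zero_apply, smul_eq_mul, ite_mul, zero_mul]
      rw [Finset.sum_ite_mem, Finset.univ_inter]
      calc ∑ i ∈ s, w' i * g i x
          = ∑ i ∈ s, ∑ j, x j * (w' i * w i j) := by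
            refine Finset.sum_congr rfl fun i _ => ?_
            rw [hrep (g i) x, Finset.mul_sum]
            refine Finset.sum_congr rfl fun j _ => by ring
        _ = ∑ j, x j * (∑ i ∈ s, w' i * w i j) := by
            rw [Finset.sum_comm]
            refine Finset.sum_congr rfl fun j _ => by rw [Finset.mul_sum]
        _ = 0 := by
            refine Finset.sum_eq_zero fun j _ => ?_
            have := hzero j
            simp only [Finset.sum_apply, Pi.smul_apply, smul_eq_mul] at this
            rw [this, mul_zero]
  · exfalso
    -- separation
    obtain ⟨φ, u, hφ0, hφ⟩ := geometric_hahn_banach_point_closed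
      (convex_convexHull ℝ (Set.range w))
      ((Set.finite_range w).isClosed_convexHull ℝ) h0
    rw [map_zero] at hφ0
    set d : Fin n → ℝ := fun j => -φ (Pi.single j 1) with hd
    have hneg : ∀ i, g i d < 0 := by
      intro i
      have h1 : g i d = -φ (w i) := by
        rw [hrep (g i) d, hrep φ (w i)]
        rw [← Finset.sum_neg_distrib]
        refine Finset.sum_congr rfl fun j _ => ?_
        simp [hd, hw]
        ring
      have h2 : u < φ (w i) := hφ _ (subset_convexHull ℝ _ ⟨i, rfl⟩)
      rw [h1]
      linarith
    -- derivative along d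
    have hder : ∀ i, HasDerivAt (fun t : ℝ => f i (xstar + t • d)) (g i d) 0 := by
      intro i
      have hline : HasDerivAt (fun t : ℝ => xstar + t • d) d 0 := by
        simpa using ((hasDerivAt_id (0:ℝ)).smul_const d).const_add xstar
      have hF : HasFDerivAt (f i) (g i) xstar :=
        (((hf i).differentiable one_ne_zero) xstar).hasFDerivAt
      have hF' : HasFDerivAt (f i) (g i) (xstar + (0:ℝ) • d) := by simpa using hF
      have := hF'.comp_hasDerivAt (0:ℝ) hline
      exact this
    have hev : ∀ i, ∀ᶠ t in nhdsWithin (0:ℝ) (Set.Ioi 0),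
        f i (xstar + t • d) < f i xstar := by
      intro i
      have hslope := hasDerivAt_iff_tendsto_slope.mp (hder i)
      have h1 : ∀ᶠ t in nhdsWithin (0:ℝ) {(0:ℝ)}ᶜ,
          slope (fun t : ℝ => f i (xstar + t • d)) 0 t < 0 :=
        hslope.eventually (Iio_mem_nhds (hneg i))
      have h2 : ∀ᶠ t in nhdsWithin (0:ℝ) (Set.Ioi 0),
          slope (fun t : ℝ => f i (xstar + t • d)) 0 t < 0 :=
        h1.filter_mono (nhdsWithin_mono _ (fun t ht => ne_of_gt ht))
      filter_upwards [h2, self_mem_nhdsWithin] with t hlt (ht : t ∈ Set.Ioi 0)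
      rw [slope_def_field, sub_zero] at hlt
      simp only [zero_smul, add_zero] at hlt
      have ht0 : (0:ℝ) < t := ht
      rcases div_neg_iff.mp hlt with ⟨h, h'⟩ | ⟨h, h'⟩
      · linarith
      · linarith
    have hall : ∀ᶠ t in nhdsWithin (0:ℝ) (Set.Ioi 0),
        ∀ i, f i (xstar + t • d) < f i xstar := by
      exact Filter.eventually_all.mpr hev
    obtain ⟨t, ht⟩ := hall.exists
    exact hpareto ⟨xstar + t • d, fun i => (ht i).le, ⟨⟨0, hk⟩, (ht _).ne⟩⟩
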